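/- For every α ∈ ℕⁿ, α is the minimum of F(α) with respect to the degree lexicographic order: α ∈ F(α), and every β ∈ F(α) satisfies α ⪯_deglex β. -/

import Mathlib

/-- The set of elementary shuffles `σ_{ij} = e_i - e_j ∈ ℤⁿ`, for `i ≤ j`. -/
def elementaryShuffles (n : ℕ) : Set (Fin n → ℤ) :=
  {v | ∃ i j : Fin n, i ≤ j ∧ v = Pi.single i (1 : ℤ) - Pi.single j (1 : ℤ)}

/-- The set `S_n ⊆ ℤⁿ` of shuffles: finite sums of elementary shuffles (including `0`). -/
def shuffles (n : ℕ) : Set (Fin n → ℤ) :=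
  (AddSubmonoid.closure (elementaryShuffles n) : AddSubmonoid (Fin n → ℤ))

/-- The inclusion `ℕⁿ ⊆ ℤⁿ`. -/
def natToInt {n : ℕ} (α : Fin n → ℕ) : Fin n → ℤ := fun i => (α i : ℤ)

/-- `D(α) = α + ℕⁿ`. -/
def Dpt {n : ℕ} (α : Fin n → ℕ) : Set (Fin n → ℕ) := {β | ∃ γ : Fin n → ℕ, β = α + γ}

/-- `E(α) = (α + S_n) ∩ ℕⁿ`. -/
def Ept {n : ℕ} (α : Fin n → ℕ) : Set (Fin n → ℕ) :=
  {β | ∃ s ∈ shuffles n, natToInt β = natToInt α + s}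

/-- `D(X) = ⋃_{α ∈ X} D(α)`. -/
def Dst {n : ℕ} (X : Set (Fin n → ℕ)) : Set (Fin n → ℕ) := ⋃ α ∈ X, Dpt α

/-- `E(X) = ⋃_{α ∈ X} E(α)`. -/
def Est {n : ℕ} (X : Set (Fin n → ℕ)) : Set (Fin n → ℕ) := ⋃ α ∈ X, Ept α

/-- `F(α) = D(E(α))`. -/
def Fpt {n : ℕ} (α : Fin n → ℕ) : Set (Fin n → ℕ) := Dst (Ept α)

/-- The degree lexicographic order on `ℕⁿ`: `α ⪯ β` iff `|α| < |β|`, or `α = β`, or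
`|α| = |β|` and the leftmost nonzero entry of `β - α ∈ ℤⁿ` is positive. -/
def deglexLE {n : ℕ} (α β : Fin n → ℕ) : Prop :=
  (∑ i, α i) < (∑ i, β i) ∨ α = β ∨
    ((∑ i, α i) = (∑ i, β i) ∧ ∃ i : Fin n, (∀ j : Fin n, j < i → α j = β j) ∧ α i < β i)

lemma shuffle_props {n : ℕ} {s : Fin n → ℤ} (hs : s ∈ shuffles n) :
    (∑ i, s i = 0) ∧ ∀ k : Fin n, 0 ≤ ∑ j ∈ Finset.Iic k, s j := by
  induction hs using AddSubmonoid.closure_induction with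
  | mem v hv =>
    obtain ⟨i, j, hij, rfl⟩ := hv
    constructor
    · simp [Finset.sum_sub_distrib, Pi.single_apply]
    · intro k
      simp only [Pi.sub_apply, Finset.sum_sub_distrib, Pi.single_apply,
        Finset.sum_ite_eq', Finset.mem_Iic]
      split_ifs with h1 h2 h2 <;> simp_all
      omega
  | zero => simp
  | add a b _ _ ha hb =>
    constructor
    · simp [Finset.sum_add_distrib, ha.1, hb.1]
    · intro k
      have := ha.2 k; have := hb.2 k
      simp only [Pi.add_apply, Finset.sum_add_distrib]
      omega

/-- For every `α ∈ ℕⁿ`, `α` is the minimum of `F(α)` with respect to the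
degree lexicographic order: `α ∈ F(α)` and every `β ∈ F(α)` satisfies `α ⪯_deglex β`. -/
theorem statement9 {n : ℕ} (α : Fin n → ℕ) :
    α ∈ Fpt α ∧ ∀ β ∈ Fpt α, deglexLE α β := by
  constructor
  · refine Set.mem_biUnion ?_ (⟨0, by simp⟩ : α ∈ Dpt α)
    exact ⟨0, AddSubmonoid.zero_mem _, by simp⟩
  · intro β hβ
    obtain ⟨δ, hδ, γ, rfl⟩ := by
      simpa [Fpt, Dst, Dpt] using hβ
    obtain ⟨s, hs, heq⟩ := hδ
    have hsum0 := (shuffle_props hs).1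
    have hpre := (shuffle_props hs).2
    have happ : ∀ i, (δ i : ℤ) = (α i : ℤ) + s i := fun i => congrFun heq i
    -- sum of δ equals sum of α
    have hsumδ : (∑ i, δ i) = ∑ i, α i := by
      have : (∑ i, (δ i : ℤ)) = ∑ i, (α i : ℤ) := by
        simp only [happ, Finset.sum_add_distrib, hsum0, add_zero]
      exact_mod_cast this
    have hsumβ : (∑ i, (δ + γ) i) = (∑ i, α i) + ∑ i, γ i := by
      simp [Finset.sum_add_distrib, hsumδ]
    rcases Nat.eq_zero_or_pos (∑ i, γ i) with hγ | hγ
    · -- γ = 0, so β = δ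
      have hγ0 : γ = 0 := by
        funext i
        have := Finset.sum_eq_zero_iff.mp hγ i (Finset.mem_univ i)
        simpa using this
      subst hγ0
      simp only [add_zero]
      by_cases hαδ : α = δ
      · exact Or.inr (Or.inl hαδ)
      · refine Or.inr (Or.inr ⟨hsumδ.symm, ?_⟩)
        have hne : (Finset.univ.filter (fun i => α i ≠ δ i)).Nonempty := by
          by_contra h
          apply hαδ
          funext i
          by_contra hi
          exact h ⟨i, Finset.mem_filter.mpr ⟨Finset.mem_univ i, hi⟩⟩
        set i := (Finset.univ.filter (fun i => α i ≠ δ i)).min' hne with hi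
        have himem := (Finset.univ.filter (fun i => α i ≠ δ i)).min'_mem hne
        have hine : α i ≠ δ i := (Finset.mem_filter.mp himem).2
        have hbefore : ∀ j, j < i → α j = δ j := by
          intro j hj
          by_contra hj'
          exact absurd (Finset.min'_le _ j (Finset.mem_filter.mpr ⟨Finset.mem_univ j, hj'⟩))
            (not_le.mpr hj)
        refine ⟨i, hbefore, ?_⟩
        -- prefix sum up to i equals s i
        have hszero : ∀ j, j < i → s j = 0 := by
          intro j hj
          have := happ j
          rw [hbefore j hj] at this
          omega
        have hIic : ∑ j ∈ Finset.Iic i, s j = s i := by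
          refine Finset.sum_eq_single_of_mem i (by simp) ?_
          intro j hj hji
          exact hszero j (lt_of_le_of_ne (Finset.mem_Iic.mp hj) hji)
        have h0 : 0 ≤ s i := hIic ▸ hpre i
        have := happ i
        omega
    · exact Or.inl (by omega)
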